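/- Define the sequence b(n) = n · ∑_{k=1}^{n} (1/k)·C(k, n−k) (a rational number a priori). Then b(n) is an integer for all n ≥ 1 and satisfies the Lucas recurrence b(1)=1, b(2)=3, b(n)=b(n-1)+b(n-2). -/

import Mathlib

open Finset BigOperators

def compositae (a : ℕ → ℤ) (n k : ℕ) : ℤ :=
  ∑ l ∈ (Finset.Nat.antidiagonalTuple k n).filter (fun l => ∀ i, 0 < l i),
    ∏ i, a (l i)

def b (n : ℕ) : ℚ :=
  n * ∑ k ∈ Finset.Icc 1 n, (1 : ℚ) / k * (k.choose (n - k) : ℚ)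

lemma b_one : b 1 = 1 := by
  simp [b, Finset.Icc_self]

lemma b_two : b 2 = 3 := by
  norm_num [b, Finset.sum_Icc_succ_top (by norm_num : 1 ≤ 2), Finset.Icc_self]

lemma fibsum (n : ℕ) :
    ∑ i ∈ Finset.range (n + 1), i.choose (n - i) = Nat.fib (n + 1) := by
  rw [Nat.fib_succ_eq_sum_choose,
    Finset.Nat.sum_antidiagonal_eq_sum_range_succ (fun i j => i.choose j)]

lemma key (m : ℕ) : b (m + 2) = (Nat.fib (m + 3) : ℚ) + Nat.fib (m + 1) := by
  have hpoint : ∀ k ∈ Finset.Icc 1 (m + 2),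
      ((m + 2 : ℕ) : ℚ) * ((1 : ℚ) / k * (k.choose (m + 2 - k) : ℚ)) =
        (k.choose (m + 2 - k) : ℚ) +
          (if k ≤ m + 1 then ((k - 1).choose (m + 1 - k) : ℚ) else 0) := by
    intro k hk
    simp only [Finset.mem_Icc] at hk
    obtain ⟨hk1, hk2⟩ := hk
    by_cases h : k ≤ m + 1
    · rw [if_pos h]
      obtain ⟨k', rfl⟩ := Nat.exists_eq_add_of_le hk1
      set d := m - k' with hd
      have h1 : m + 2 - (1 + k') = d + 1 := by omega
      have h2 : m + 1 - (1 + k') = d := by omega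
      have h3 : 1 + k' - 1 = k' := by omega
      rw [h1, h2, h3]
      have hnat : (d + 1) * ((1 + k').choose (d + 1)) = (1 + k') * k'.choose d := by
        rw [add_comm 1 k', mul_comm]
        exact (Nat.add_one_mul_choose_eq k' d).symm
      have hnat2 : (m + 2) * ((1 + k').choose (d + 1)) =
          ((1 + k').choose (d + 1) + k'.choose d) * (1 + k') :=
        calc (m + 2) * ((1 + k').choose (d + 1))
            = (d + 1) * ((1 + k').choose (d + 1))
              + (1 + k') * ((1 + k').choose (d + 1)) := by
                have hm : m + 2 = (d + 1) + (1 + k') := by omega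
                rw [hm]; ring
          _ = (1 + k') * k'.choose d + (1 + k') * ((1 + k').choose (d + 1)) := by
                rw [hnat]
          _ = ((1 + k').choose (d + 1) + k'.choose d) * (1 + k') := by ring
      have hkq : ((1 + k' : ℕ) : ℚ) ≠ 0 := by positivity
      field_simp
      exact_mod_cast hnat2.trans (mul_comm _ _)
    · have hk : k = m + 2 := by omega
      subst hk
      rw [if_neg h]
      simp only [Nat.sub_self, Nat.choose_zero_right, Nat.cast_one, mul_one, add_zero]
      rw [mul_one_div, div_self (by positivity)]
  rw [b, Finset.mul_sum, Finset.sum_congr rfl hpoint, Finset.sum_add_distrib]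
  congr 1
  · have h1 : ∑ k ∈ Finset.Icc 1 (m + 2), k.choose (m + 2 - k) = Nat.fib (m + 3) := by
      rw [← fibsum (m + 2), Finset.sum_range_succ' (fun i => i.choose (m + 2 - i)) (m + 2)]
      rw [← Finset.Ico_add_one_right_eq_Icc, Finset.sum_Ico_eq_sum_range]
      simp only [Nat.sub_zero, Nat.choose_eq_zero_of_lt (show 0 < m + 2 by omega), add_zero,
        show m + 2 + 1 - 1 = m + 2 from rfl]
      exact Finset.sum_congr rfl fun i _ => by rw [add_comm 1 i]
    rw [← h1]
    push_cast
    rfl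
  · rw [Finset.sum_Icc_succ_top (show 1 ≤ m + 2 by omega), if_neg (by omega), add_zero]
    have h2 : ∑ k ∈ Finset.Icc 1 (m + 1), (k - 1).choose (m + 1 - k) = Nat.fib (m + 1) := by
      rw [← Finset.Ico_add_one_right_eq_Icc, Finset.sum_Ico_eq_sum_range]
      rw [show m + 1 + 1 - 1 = m + 1 from rfl, ← fibsum m]
      exact Finset.sum_congr rfl fun i _ => by
        congr 1 <;> omega
    have h3 : ∀ k ∈ Finset.Icc 1 (m + 1),
        (if k ≤ m + 1 then ((k - 1).choose (m + 1 - k) : ℚ) else 0) =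
          ((k - 1).choose (m + 1 - k) : ℚ) := by
      intro k hk
      simp only [Finset.mem_Icc] at hk
      rw [if_pos hk.2]
    rw [Finset.sum_congr rfl h3, ← h2]
    push_cast
    rfl

theorem stmt_16 :
    (∀ n : ℕ, 1 ≤ n → ∃ m : ℤ, b n = (m : ℚ)) ∧
    b 1 = 1 ∧ b 2 = 3 ∧ ∀ n : ℕ, 3 ≤ n → b n = b (n - 1) + b (n - 2) := by
  refine ⟨?_, b_one, b_two, ?_⟩
  · intro n hn
    match n, hn with
    | 1, _ => exact ⟨1, b_one⟩
    | (m + 2), _ => exact ⟨(Nat.fib (m + 3) : ℤ) + Nat.fib (m + 1), by rw [key]; push_cast; ring⟩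
  · intro n hn
    obtain ⟨m, rfl⟩ : ∃ m, n = m + 3 := ⟨n - 3, by omega⟩
    have e1 : m + 3 - 1 = m + 2 := by omega
    have e2 : m + 3 - 2 = m + 1 := by omega
    rw [e1, e2]
    match m with
    | 0 =>
      rw [show (0:ℕ)+3 = 1+2 from rfl, key 1, key 0, b_one]
      norm_num [Nat.fib]
    | (m' + 1) =>
      rw [show m' + 1 + 3 = (m' + 2) + 2 from rfl, key (m' + 2),
        show m' + 1 + 2 = (m' + 1) + 2 from rfl, key (m' + 1), key m']
      have f1 : Nat.fib (m' + 2 + 3) = Nat.fib (m' + 1 + 3) + Nat.fib (m' + 3) := by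
        rw [show m' + 2 + 3 = (m' + 3) + 2 from rfl, Nat.fib_add_two]; ring_nf
      have f2 : Nat.fib (m' + 3) = Nat.fib (m' + 2) + Nat.fib (m' + 1) := by
        rw [show m' + 3 = (m' + 1) + 2 from rfl, Nat.fib_add_two]; ring_nf
      rw [f1, f2]
      push_cast; ring
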